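/- Let $f:\{0,1\}^n\to\{0,1\}$ be balanced and $f_0$ a dictatorship function, $0<p<1/2$. If $N^{\mathsf{sym}}_\alpha(f) \leq N^{\mathsf{sym}}_\alpha(f_0)$ for all $\alpha\in[1,2]$, then $I(f(Y);X)\leq 1-h(p)$, where $h$ is the binary entropy function. -/

import Mathlib

open Finset Real Filter Topology

/-- The noise operator `T_p` applied to a Boolean function on the Hamming cube. -/
noncomputable def Tp (n : ℕ) (p : ℝ) (f : (Fin n → Bool) → Bool) (x : Fin n → Bool) : ℝ :=
  ∑ y : Fin n → Bool,
    p ^ hammingDist x y * (1 - p) ^ (n - hammingDist x y) * (if f y then 1 else 0)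

/-- A Boolean function is balanced if it takes the value 1 exactly half the time. -/
def IsBalanced (n : ℕ) (f : (Fin n → Bool) → Bool) : Prop :=
  ∑ y : Fin n → Bool, (if f y then (1 : ℝ) else 0) = 2 ^ n / 2

/-- Dictatorship function on coordinate `i`. -/
def dict (n : ℕ) (i : Fin n) : (Fin n → Bool) → Bool := fun y => y i

/-- `N_α(f) = ∑_x (T_p f x)^α` (real power). -/
noncomputable def Nal (n : ℕ) (p : ℝ) (f : (Fin n → Bool) → Bool) (α : ℝ) : ℝ :=
  ∑ x : Fin n → Bool, Tp n p f x ^ α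

/-- Symmetrized version `N^sym_α(f) = ∑_x (T_p f x)^α + (1 - T_p f x)^α`. -/
noncomputable def Nsym (n : ℕ) (p : ℝ) (f : (Fin n → Bool) → Bool) (α : ℝ) : ℝ :=
  ∑ x : Fin n → Bool, (Tp n p f x ^ α + (1 - Tp n p f x) ^ α)

/-- Binary entropy function, in bits. -/
noncomputable def binEnt (t : ℝ) : ℝ := -(t * Real.logb 2 t) - (1 - t) * Real.logb 2 (1 - t)

/-- Mutual information `I(f(Y); X)` for a balanced Boolean function `f`,
with `X` uniform on the cube and `Y` the output of a BSC(p) on input `X`. -/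
noncomputable def MI (n : ℕ) (p : ℝ) (f : (Fin n → Bool) → Bool) : ℝ :=
  1 - ((2 : ℝ) ^ n)⁻¹ * ∑ x : Fin n → Bool, binEnt (Tp n p f x)

lemma weight_eq_prod (p : ℝ) (n : ℕ) (x y : Fin n → Bool) :
    p ^ hammingDist x y * (1 - p) ^ (n - hammingDist x y)
      = ∏ j : Fin n, (if x j = y j then (1 - p) else p) := by
  rw [Finset.prod_ite, Finset.prod_const, Finset.prod_const]
  have h2 : #{i | x i = y i} + #{i | ¬ x i = y i} = n := by
    rw [Finset.card_filter_add_card_filter_not]; simp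
  have h1 : hammingDist x y = #{i | ¬ x i = y i} := rfl
  rw [mul_comm]
  congr 1
  congr 1
  omega

lemma sum_weight (p : ℝ) (n : ℕ) (x : Fin n → Bool) :
    ∑ y : Fin n → Bool, p ^ hammingDist x y * (1 - p) ^ (n - hammingDist x y) = 1 := by
  have h := Fintype.prod_sum (κ := fun _ : Fin n => Bool)
    (fun j b => if x j = b then (1 - p) else p)
  simp only [weight_eq_prod p n x, ← h]
  apply Finset.prod_eq_one
  intro j _
  rw [Fintype.sum_bool]
  cases hx : x j <;> simp <;> ring

lemma Tp_nonneg {p : ℝ} (hp : 0 < p) (hp2 : p < 1) (n : ℕ) (f : (Fin n → Bool) → Bool)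
    (x : Fin n → Bool) : 0 ≤ Tp n p f x := by
  apply Finset.sum_nonneg
  intro y _
  have : (0:ℝ) ≤ 1 - p := by linarith
  positivity

lemma Tp_le_one {p : ℝ} (hp : 0 < p) (hp2 : p < 1) (n : ℕ) (f : (Fin n → Bool) → Bool)
    (x : Fin n → Bool) : Tp n p f x ≤ 1 := by
  rw [← sum_weight p n x]
  apply Finset.sum_le_sum
  intro y _
  have h1 : (0:ℝ) ≤ 1 - p := by linarith
  have : (0:ℝ) ≤ p ^ hammingDist x y * (1 - p) ^ (n - hammingDist x y) := by positivity
  rcases f y with _ | _ <;> simp <;> nlinarith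

lemma Tp_dict (p : ℝ) (n : ℕ) (i : Fin n) (x : Fin n → Bool) :
    Tp n p (dict n i) x = if x i then 1 - p else p := by
  have key : ∀ y : Fin n → Bool,
      p ^ hammingDist x y * (1 - p) ^ (n - hammingDist x y) * (if dict n i y then 1 else 0)
      = ∏ j : Fin n, ((if x j = y j then (1 - p) else p) * (if j = i then (if y j then 1 else 0) else 1)) := by
    intro y
    rw [Finset.prod_mul_distrib, ← weight_eq_prod]
    congr 1
    rw [Finset.prod_eq_single i (by intro b _ hb; simp [hb]) (by simp)]
    simp [dict]
    split_ifs <;> simp_all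
  unfold Tp
  simp only [key]
  rw [← Fintype.prod_sum (κ := fun _ : Fin n => Bool)
      (f := fun j b => (if x j = b then (1:ℝ)-p else p) * if j = i then (if b then 1 else 0) else 1)]
  rw [Finset.prod_eq_single i]
  · simp
  · intro b _ hb
    simp only [if_neg hb, mul_one]
    rw [Fintype.sum_bool]
    cases h : x b <;> simp <;> ring
  · simp

lemma hasDerivAt_rpow_base {t : ℝ} (ht : 0 ≤ t) :
    HasDerivAt (fun α : ℝ => t ^ α) (t * Real.log t) 1 := by
  rcases eq_or_lt_of_le ht with h | h
  · subst h
    have hev : (fun α : ℝ => (0:ℝ) ^ α) =ᶠ[𝓝 (1:ℝ)] fun _ => 0 := by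
      filter_upwards [Ioi_mem_nhds (by norm_num : (0:ℝ) < 1)] with α hα
      rw [Real.zero_rpow (ne_of_gt hα)]
    simpa using (hasDerivAt_const (1:ℝ) (0:ℝ)).congr_of_eventuallyEq hev
  · simpa [Real.rpow_one] using (Real.hasStrictDerivAt_const_rpow h 1).hasDerivAt

lemma hasDerivAt_Nsym (n : ℕ) {p : ℝ} (hp : 0 < p) (hp1 : p < 1)
    (f : (Fin n → Bool) → Bool) :
    HasDerivAt (fun α => Nsym n p f α)
      (∑ x : Fin n → Bool, (Tp n p f x * Real.log (Tp n p f x)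
        + (1 - Tp n p f x) * Real.log (1 - Tp n p f x))) 1 := by
  unfold Nsym
  apply HasDerivAt.fun_sum
  intro x _
  exact (hasDerivAt_rpow_base (Tp_nonneg hp hp1 n f x)).add
    (hasDerivAt_rpow_base (by linarith [Tp_le_one hp hp1 n f x]))

lemma Nsym_one (n : ℕ) (p : ℝ) (f : (Fin n → Bool) → Bool) :
    Nsym n p f 1 = 2 ^ n := by
  unfold Nsym
  have h : ∀ x : Fin n → Bool,
      Tp n p f x ^ (1:ℝ) + (1 - Tp n p f x) ^ (1:ℝ) = 1 := by
    intro x; rw [Real.rpow_one, Real.rpow_one]; ring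
  rw [Finset.sum_congr rfl (fun x _ => h x), Finset.sum_const, Finset.card_univ]
  simp [Fintype.card_fun]

lemma ent_link (t : ℝ) :
    t * Real.log t + (1 - t) * Real.log (1 - t) = -(Real.log 2 * binEnt t) := by
  unfold binEnt
  rw [Real.logb, Real.logb]
  have h2 : Real.log 2 ≠ 0 := ne_of_gt (Real.log_pos (by norm_num))
  field_simp
  ring

lemma binEnt_one_sub (t : ℝ) : binEnt (1 - t) = binEnt t := by
  unfold binEnt
  have h : (1:ℝ) - (1 - t) = t := by ring
  rw [h]
  ring

/-- If the symmetrized Li–Médard conjecture holds for a balanced `f`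
(`N^sym_α(f) ≤ N^sym_α(f_0)` for all `α ∈ [1,2]`), then the Courtade–Kumar bound
`I(f(Y);X) ≤ 1 - h(p)` holds for `f`. -/
theorem sym_li_medard_implies_CK (n : ℕ) (p : ℝ) (hp : 0 < p) (hp2 : p < 1/2)
    (f : (Fin n → Bool) → Bool) (hf : IsBalanced n f) (i : Fin n)
    (hLM : ∀ α ∈ Set.Icc (1 : ℝ) 2, Nsym n p f α ≤ Nsym n p (dict n i) α) :
    MI n p f ≤ 1 - binEnt p := by
  have hp1 : p < 1 := by linarith
  set g : ℝ → ℝ := fun α => Nsym n p (dict n i) α - Nsym n p f α with hgdef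
  set D : ℝ := (∑ x : Fin n → Bool, (Tp n p (dict n i) x * Real.log (Tp n p (dict n i) x)
        + (1 - Tp n p (dict n i) x) * Real.log (1 - Tp n p (dict n i) x)))
      - (∑ x : Fin n → Bool, (Tp n p f x * Real.log (Tp n p f x)
        + (1 - Tp n p f x) * Real.log (1 - Tp n p f x))) with hDdef
  have hD : HasDerivAt g D 1 :=
    (hasDerivAt_Nsym n hp hp1 (dict n i)).sub (hasDerivAt_Nsym n hp hp1 f)
  have hg1 : g 1 = 0 := by simp [hgdef, Nsym_one]
  -- slope nonneg on the right
  have htend : Tendsto (slope g 1) (𝓝[>] (1:ℝ)) (𝓝 D) :=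
    (hasDerivAt_iff_tendsto_slope.mp hD).mono_left
      (nhdsWithin_mono _ (fun a ha => ne_of_gt ha))
  have hev : ∀ᶠ α in 𝓝[>] (1:ℝ), 0 ≤ slope g 1 α := by
    filter_upwards [Ioo_mem_nhdsGT_of_mem (Set.left_mem_Ico.mpr (by norm_num : (1:ℝ) < 2))]
      with α hα
    have h1 : (0:ℝ) < α - 1 := by linarith [hα.1]
    have h2 : 0 ≤ g α := by
      have := hLM α ⟨le_of_lt hα.1, le_of_lt hα.2⟩
      simp [hgdef]; linarith
    rw [slope_def_field]
    exact div_nonneg (by linarith) (by linarith)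
  have hD0 : 0 ≤ D := ge_of_tendsto htend hev
  have hsumdict : (∑ x : Fin n → Bool, binEnt (Tp n p (dict n i) x)) = 2 ^ n * binEnt p := by
    have hb : ∀ x : Fin n → Bool, binEnt (Tp n p (dict n i) x) = binEnt p := by
      intro x
      rw [Tp_dict]
      cases h : x i
      · simp
      · simp [binEnt_one_sub]
    rw [Finset.sum_congr rfl (fun x _ => hb x), Finset.sum_const, Finset.card_univ]
    simp [Fintype.card_fun]
  have hDe : D = Real.log 2 * ((∑ x : Fin n → Bool, binEnt (Tp n p f x)) - 2 ^ n * binEnt p) := by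
    rw [hDdef]
    simp only [ent_link, Finset.sum_neg_distrib, ← Finset.mul_sum, hsumdict]
    ring
  have hlog2 : (0:ℝ) < Real.log 2 := Real.log_pos (by norm_num)
  have hS : 2 ^ n * binEnt p ≤ ∑ x : Fin n → Bool, binEnt (Tp n p f x) := by
    have h0 : 0 ≤ (∑ x : Fin n → Bool, binEnt (Tp n p f x)) - 2 ^ n * binEnt p :=
      nonneg_of_mul_nonneg_right (by linarith [hDe ▸ hD0]) hlog2
    linarith
  unfold MI
  have h2n : (0:ℝ) < 2 ^ n := by positivity
  have hfin : binEnt p ≤ ((2:ℝ) ^ n)⁻¹ * ∑ x : Fin n → Bool, binEnt (Tp n p f x) := by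
    rw [inv_mul_eq_div, le_div_iff₀ h2n]
    linarith [hS, mul_comm (binEnt p) ((2:ℝ) ^ n)]
  linarith
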